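/- Let P be a preorder on a set and suppose P is equivalent (as a preordered set) to the poset of a finite family of subsets of a finite set ordered by reverse inclusion. Then P has a finite μ-set. Consequently, if A is a finite algebra, the preordered set of coexact unifiers of A, which is equivalent to (Con_e(A), ⊇) where Con_e(A) is a set of congruences on A, has a μ-set of cardinality at most 2^{|A|²}; hence its type is unitary or finitary. -/

import Mathlib

def MuCompleteR {P : Type*} (le : P → P → Prop) (M : Set P) : Prop :=
  ∀ x : P, ∃ y ∈ M, le x y

def MuSetR {P : Type*} (le : P → P → Prop) (M : Set P) : Prop :=
  MuCompleteR le M ∧ ∀ x ∈ M, ∀ y ∈ M, x ≠ y → ¬ le x y ∧ ¬ le y x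

/-- A preorder equivalent to a finite family of subsets of a finite set ordered by
reverse inclusion has a finite μ-set; in the application `P` is the preordered set of
coexact unifiers of a finite algebra `A`, the finite set is `A × A`, the family is
`Con_e(A)`, and the μ-set has cardinality at most `2^(|A|²)`. -/
theorem finite_muSet_of_equiv_finite_family {P : Type*} [Preorder P]
    {X : Type*} [Finite X] (F : Set (Set X)) (e : P → F)
    (h1 : ∀ q : F, ∃ p : P, (q : Set X) ⊆ (e p : Set X) ∧ (e p : Set X) ⊆ (q : Set X))
    (h2 : ∀ p₁ p₂ : P, p₁ ≤ p₂ ↔ (e p₂ : Set X) ⊆ (e p₁ : Set X)) :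
    (∃ M : Set P, M.Finite ∧ MuSetR (· ≤ ·) M) ∧
      (∀ M : Set P, MuSetR (· ≤ ·) M → M.Finite ∧ Nat.card M ≤ 2 ^ (Nat.card X)) := by
  classical
  have hSetX : Finite (Set X) := inferInstance
  -- image of e in Set X
  set I : Set (Set X) := Set.range (fun p : P => (e p : Set X)) with hI
  set Min : Set (Set X) := {s | s ∈ I ∧ ∀ t ∈ I, t ⊆ s → t = s} with hMin
  -- the chosen representatives
  set M : Set P := {p : P | ∃ s ∈ Min, ∃ h : ∃ q : P, (e q : Set X) = s, p = h.choose}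
    with hM
  have memM : ∀ p ∈ M, (e p : Set X) ∈ Min := by
    intro p hp
    obtain ⟨s, hs, h, rfl⟩ := hp
    rw [h.choose_spec]; exact hs
  have key : ∀ p ∈ M, ∀ p' ∈ M, (e p : Set X) = (e p' : Set X) → p = p' := by
    intro p hp p' hp' hee
    obtain ⟨s, hs, h, rfl⟩ := hp
    obtain ⟨s', hs', h', rfl⟩ := hp'
    have : s = s' := by rw [← h.choose_spec, ← h'.choose_spec, hee]
    subst this
    rfl
  constructor
  · refine ⟨M, ?_, ?_, ?_⟩
    · -- M is finite
      apply Set.Finite.of_finite_image (f := fun p => (e p : Set X))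
      · exact Set.toFinite _
      · intro p hp p' hp' hee
        exact key p hp p' hp' hee
    · -- completeness
      intro x
      have hne : ({t | t ∈ I ∧ t ⊆ (e x : Set X)} : Set (Set X)).Nonempty :=
        ⟨(e x : Set X), ⟨x, rfl⟩, subset_rfl⟩
      obtain ⟨t, ⟨htI, htx⟩, htmin⟩ : ∃ t ∈ ({t | t ∈ I ∧ t ⊆ (e x : Set X)} : Set (Set X)),
          ∀ t' ∈ ({t | t ∈ I ∧ t ⊆ (e x : Set X)} : Set (Set X)), t' ≤ t → t = t' := by
        obtain ⟨t, ht, hmin⟩ := (Set.toFinite _).exists_minimal hne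
        exact ⟨t, ht, fun t' ht' hle => le_antisymm (hmin ht' hle) hle⟩
      have htMin : t ∈ Min := by
        refine ⟨htI, fun u hu hut => ?_⟩
        exact (htmin u ⟨hu, hut.trans htx⟩ hut).symm
      have hex : ∃ q : P, (e q : Set X) = t := htI
      refine ⟨hex.choose, ⟨t, htMin, hex, rfl⟩, ?_⟩
      refine (h2 x hex.choose).2 ?_
      rw [hex.choose_spec]
      exact htx
    · -- antichain
      intro p hp p' hp' hne
      have h1' := memM p hp
      have h2' := memM p' hp'
      constructor
      · intro hle
        rw [h2] at hle
        exact hne (key p hp p' hp' ((h1'.2 _ h2'.1 hle).symm))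
      · intro hle
        rw [h2] at hle
        exact hne (key p hp p' hp' (h2'.2 _ h1'.1 hle))
  · intro M ⟨_, hanti⟩
    have hinj : Set.InjOn (fun p => (e p : Set X)) M := by
      intro p hp p' hp' hee
      by_contra hne
      exact (hanti p hp p' hp' hne).1 ((h2 p p').2 (le_of_eq hee.symm))
    have hfin : M.Finite := Set.Finite.of_finite_image (Set.toFinite _) hinj
    refine ⟨hfin, ?_⟩
    calc Nat.card M ≤ Nat.card (Set X) := by
          have : Function.Injective (fun p : M => (e p : Set X)) := by
            intro ⟨a, ha⟩ ⟨b, hb⟩ hab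
            exact Subtype.ext (hinj ha hb hab)
          exact Nat.card_le_card_of_injective _ this
      _ = 2 ^ Nat.card X := by
          have := Fintype.ofFinite X
          simp [Nat.card_eq_fintype_card]
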